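/- For every x ≥ 0 and p ∈ (0,1], the Hamiltonian satisfies H(x,0,p) = 0; more precisely H(x,ξ,p) = ((λ+r)/p − λ + σ² − μ)·x·ξ whenever 0 ≤ ξ ≤ p·L'(0); and for all ξ ≥ 0 one has the two-sided bound (((λ+r)x − 1)/p + (σ² − λ − μ)x)·ξ ≤ H(x,ξ,p) ≤ ((λ+r)/p − λ + σ² − μ)·x·ξ. -/

import Mathlib

open Set Filter

/-- The Hamiltonian `H(x,ξ,p) = inf_{ω ∈ [0,1)} { L(ω) − (ξ/p)·ω } + ((λ+r)/p − λ + σ² − μ)·x·ξ`. -/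
noncomputable def Ham (L : ℝ → ℝ) (lam r mu sig x ξ p : ℝ) : ℝ :=
  sInf ((fun ω => L ω - ξ / p * ω) '' Set.Ico 0 1) +
    ((lam + r) / p - lam + sig ^ 2 - mu) * x * ξ

theorem stmt_0
    (r mu lam sig : ℝ) (hmu : 0 ≤ mu) (hr : mu < r) (hlam : 0 ≤ lam) (hsig : 0 ≤ sig)
    (L : ℝ → ℝ)
    (hL : ContDiffOn ℝ 2 L (Set.Ico 0 1))
    (hL0 : L 0 = 0)
    (hL1 : ∀ u ∈ Set.Ico (0:ℝ) 1, 0 < deriv L u)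
    (hL2 : ∀ u ∈ Set.Ico (0:ℝ) 1, 0 < deriv (deriv L) u)
    (hLtop : Filter.Tendsto L (nhdsWithin 1 (Set.Iio 1)) Filter.atTop)
    (x : ℝ) (hx : 0 ≤ x) (p : ℝ) (hp : p ∈ Set.Ioc (0:ℝ) 1) :
    Ham L lam r mu sig x 0 p = 0 ∧
    (∀ ξ : ℝ, 0 ≤ ξ → ξ ≤ p * deriv L 0 →
      Ham L lam r mu sig x ξ p = ((lam + r) / p - lam + sig ^ 2 - mu) * x * ξ) ∧
    (∀ ξ : ℝ, 0 ≤ ξ →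
      (((lam + r) * x - 1) / p + (sig ^ 2 - lam - mu) * x) * ξ ≤ Ham L lam r mu sig x ξ p ∧
      Ham L lam r mu sig x ξ p ≤ ((lam + r) / p - lam + sig ^ 2 - mu) * x * ξ) := by
  obtain ⟨hp0, hp1⟩ := hp
  have h0mem : (0:ℝ) ∈ Set.Ico (0:ℝ) 1 := ⟨le_refl 0, one_pos⟩
  have hint : interior (Set.Ico (0:ℝ) 1) = Set.Ioo 0 1 := interior_Ico
  -- L is differentiable at each point of [0,1)
  have hLd : ∀ u ∈ Set.Ico (0:ℝ) 1, DifferentiableAt ℝ L u := fun u hu =>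
    differentiableAt_of_deriv_ne_zero (ne_of_gt (hL1 u hu))
  have hLc : ContinuousOn L (Set.Ico 0 1) := fun u hu =>
    (hLd u hu).continuousAt.continuousWithinAt
  -- deriv L is differentiable (hence continuous) at each point of [0,1)
  have hL'c : ContinuousOn (deriv L) (Set.Ico 0 1) := fun u hu =>
    (differentiableAt_of_deriv_ne_zero (ne_of_gt (hL2 u hu))).continuousAt.continuousWithinAt
  -- L is monotone on [0,1)
  have hLmono : MonotoneOn L (Set.Ico 0 1) := by
    apply (strictMonoOn_of_deriv_pos (convex_Ico 0 1) hLc ?_).monotoneOn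
    intro u hu
    rw [hint] at hu
    exact hL1 u ⟨hu.1.le, hu.2⟩
  -- deriv L is monotone on [0,1)
  have hL'mono : MonotoneOn (deriv L) (Set.Ico 0 1) := by
    apply (strictMonoOn_of_deriv_pos (convex_Ico 0 1) hL'c ?_).monotoneOn
    intro u hu
    rw [hint] at hu
    exact hL2 u ⟨hu.1.le, hu.2⟩
  have hLnn : ∀ u ∈ Set.Ico (0:ℝ) 1, 0 ≤ L u := fun u hu => by
    have := hLmono h0mem hu hu.1
    linarith [hL0 ▸ this]
  -- main lemmas about the infimum
  have key : ∀ ξ : ℝ, 0 ≤ ξ →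
      -(ξ / p) ≤ sInf ((fun ω => L ω - ξ / p * ω) '' Set.Ico 0 1) ∧
      sInf ((fun ω => L ω - ξ / p * ω) '' Set.Ico 0 1) ≤ 0 := by
    intro ξ hξ
    have hc : 0 ≤ ξ / p := div_nonneg hξ hp0.le
    have h0S : (0:ℝ) ∈ (fun ω => L ω - ξ / p * ω) '' Set.Ico 0 1 :=
      ⟨0, h0mem, by simp [hL0]⟩
    have hlb : ∀ y ∈ (fun ω => L ω - ξ / p * ω) '' Set.Ico 0 1, -(ξ / p) ≤ y := by
      rintro y ⟨ω, hω, rfl⟩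
      have h1 : 0 ≤ L ω := hLnn ω hω
      have h2 : ξ / p * ω ≤ ξ / p := by
        nlinarith [hω.1, hω.2.le]
      simp only
      linarith
    constructor
    · exact le_csInf ⟨0, h0S⟩ hlb
    · exact csInf_le ⟨-(ξ / p), hlb⟩ h0S
  -- exact value of the infimum when ξ ≤ p L'(0)
  have keyeq : ∀ ξ : ℝ, 0 ≤ ξ → ξ ≤ p * deriv L 0 →
      sInf ((fun ω => L ω - ξ / p * ω) '' Set.Ico 0 1) = 0 := by
    intro ξ hξ hξp
    set c := ξ / p with hcdef
    have hc : c ≤ deriv L 0 := by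
      rw [hcdef, div_le_iff₀ hp0]
      linarith [mul_comm p (deriv L 0)]
    have hfderiv : ∀ u ∈ Set.Ico (0:ℝ) 1,
        deriv (fun ω => L ω - c * ω) u = deriv L u - c := by
      intro u hu
      rw [deriv_fun_sub (hLd u hu) (by fun_prop)]
      congr 1
      show deriv (fun ω => c * ω) u = c
      rw [deriv_const_mul_field]
      simp
    have hfmono : MonotoneOn (fun ω => L ω - c * ω) (Set.Ico 0 1) := by
      apply monotoneOn_of_deriv_nonneg (convex_Ico 0 1)
      · exact hLc.sub (by fun_prop)
      · intro u hu
        rw [hint] at hu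
        exact ((hLd u ⟨hu.1.le, hu.2⟩).sub (by fun_prop)).differentiableWithinAt
      · intro u hu
        rw [hint] at hu
        rw [hfderiv u ⟨hu.1.le, hu.2⟩]
        have := hL'mono h0mem ⟨hu.1.le, hu.2⟩ hu.1.le
        linarith
    have hleast : IsLeast ((fun ω => L ω - c * ω) '' Set.Ico 0 1) 0 := by
      constructor
      · exact ⟨0, h0mem, by simp [hL0]⟩
      · rintro y ⟨ω, hω, rfl⟩
        have := hfmono h0mem hω hω.1
        simp only [mul_zero, hL0, sub_zero] at this
        simpa using this
    exact hleast.csInf_eq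
  have hpne : p ≠ 0 := ne_of_gt hp0
  refine ⟨?_, ?_, ?_⟩
  · have h00 : (0:ℝ) ≤ p * deriv L 0 := mul_nonneg hp0.le (hL1 0 h0mem).le
    simpa [Ham] using keyeq 0 le_rfl h00
  · intro ξ hξ hξp
    simp [Ham, keyeq ξ hξ hξp]
  · intro ξ hξ
    obtain ⟨h1, h2⟩ := key ξ hξ
    constructor
    · have : (((lam + r) * x - 1) / p + (sig ^ 2 - lam - mu) * x) * ξ =
        -(ξ / p) + ((lam + r) / p - lam + sig ^ 2 - mu) * x * ξ := by
        field_simp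
        ring
      rw [this, Ham]
      linarith
    · rw [Ham]
      linarith
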